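/- Let p₀(n) and p_d(n) be nonzero polynomials over a field K of characteristic zero, and let N be the largest natural number k such that gcd(p_d(n-d), p₀(n+k)) has positive degree. Define G_k(n) = gcd(∏_{j=0}^{k-1} p₀(n+j), ∏_{j=0}^{k-1} p_d(n-d-j)). Then G_k(n) = G_{N+1}(n) for all k ≥ N+1. -/

import Mathlib

open Polynomial Finset

private lemma shift_coprime_aux {K : Type*} [Field K] [CharZero K]
    (p₀ pd : K[X]) (d N : ℕ)
    (hcop : ∀ k : ℕ, N < k →
      IsCoprime (pd.comp (X - C (d : K))) (p₀.comp (X + C (k : K))))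
    (j m : ℕ) (hmj : N < m + j) :
    IsCoprime (pd.comp (X - C ((d : K) + (j : K)))) (p₀.comp (X + C (m : K))) := by
  have h : IsCoprime ((pd.comp (X - C (d : K))).comp (X - C (j : K)))
      ((p₀.comp (X + C ((m + j : ℕ) : K))).comp (X - C (j : K))) :=
    (hcop (m + j) hmj).map (eval₂RingHom C (X - C (j : K)))
  rw [Polynomial.comp_assoc, Polynomial.comp_assoc] at h
  have e1 : (X - C ((d : K))).comp (X - C ((j : K))) = X - C ((d : K) + (j : K)) := by
    simp [sub_comp]; ring
  have e2 : (X + C (((m + j : ℕ)) : K)).comp (X - C ((j : K))) = X + C ((m : K)) := by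
    push_cast
    simp [add_comp, sub_comp]
  rwa [e1, e2] at h

/-- Theorem 4.1: the GCD sequence
`G_k(n) = gcd(∏_{j<k} p₀(n+j), ∏_{j<k} p_d(n-d-j))` stabilizes at `G_{N+1}`,
where `N` is the dispersion of `p_d(n-d)` and `p₀(n)`. -/
theorem gcd_sequence_converges_general {K : Type*} [Field K] [CharZero K] [DecidableEq K]
    (p₀ pd : K[X]) (hp₀ : p₀ ≠ 0) (hpd : pd ≠ 0) (d : ℕ) (N : ℕ)
    (hmax : 0 < (gcd (pd.comp (X - C (d : K))) (p₀.comp (X + C (N : K)))).degree)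
    (hcop : ∀ k : ℕ, N < k →
      IsCoprime (pd.comp (X - C (d : K))) (p₀.comp (X + C (k : K))))
    (G : ℕ → K[X])
    (hG : ∀ k, G k =
      gcd (∏ j ∈ range k, p₀.comp (X + C (j : K)))
          (∏ j ∈ range k, pd.comp (X - C ((d : K) + (j : K))))) :
    ∀ k, N + 1 ≤ k → G k = G (N + 1) := by
  intro k hk
  rw [hG k, hG (N + 1)]
  set A : ℕ → K[X] := fun m => ∏ j ∈ range m, p₀.comp (X + C (j : K)) with hA
  set B : ℕ → K[X] := fun m => ∏ j ∈ range m, pd.comp (X - C ((d : K) + (j : K))) with hB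
  show gcd (A k) (B k) = gcd (A (N + 1)) (B (N + 1))
  have hAsplit : A (N + 1) * (∏ j ∈ Ico (N + 1) k, p₀.comp (X + C (j : K))) = A k :=
    Finset.prod_range_mul_prod_Ico _ hk
  have hBsplit : B (N + 1) * (∏ j ∈ Ico (N + 1) k, pd.comp (X - C ((d : K) + (j : K)))) = B k :=
    Finset.prod_range_mul_prod_Ico _ hk
  apply dvd_antisymm_of_normalize_eq (normalize_gcd _ _) (normalize_gcd _ _)
  · -- gcd (A k) (B k) ∣ gcd (A (N+1)) (B (N+1))
    apply GCDMonoid.dvd_gcd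
    · -- the extra A-factors are coprime to B k
      have hcopA : IsCoprime (∏ j ∈ Ico (N + 1) k, p₀.comp (X + C (j : K))) (B k) := by
        apply IsCoprime.prod_left
        intro m hm
        apply IsCoprime.prod_right
        intro j _
        have hmj : N < m + j := by
          have := (Finset.mem_Ico.mp hm).1
          omega
        exact (shift_coprime_aux p₀ pd d N hcop j m hmj).symm
      have hco : IsCoprime (gcd (A k) (B k))
          (∏ j ∈ Ico (N + 1) k, p₀.comp (X + C (j : K))) :=
        hcopA.symm.of_isCoprime_of_dvd_left (gcd_dvd_right _ _)
      exact hco.dvd_of_dvd_mul_right (by rw [hAsplit]; exact gcd_dvd_left (A k) (B k))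
    · have hcopB : IsCoprime (∏ j ∈ Ico (N + 1) k, pd.comp (X - C ((d : K) + (j : K)))) (A k) := by
        apply IsCoprime.prod_left
        intro j hj
        apply IsCoprime.prod_right
        intro m _
        have hmj : N < m + j := by
          have := (Finset.mem_Ico.mp hj).1
          omega
        exact shift_coprime_aux p₀ pd d N hcop j m hmj
      have hco : IsCoprime (gcd (A k) (B k))
          (∏ j ∈ Ico (N + 1) k, pd.comp (X - C ((d : K) + (j : K)))) :=
        hcopB.symm.of_isCoprime_of_dvd_left (gcd_dvd_left _ _)
      exact hco.dvd_of_dvd_mul_right (by rw [hBsplit]; exact gcd_dvd_right (A k) (B k))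
  · -- gcd (A (N+1)) (B (N+1)) ∣ gcd (A k) (B k)
    apply GCDMonoid.dvd_gcd
    · exact (gcd_dvd_left _ _).trans
        (Finset.prod_dvd_prod_of_subset _ _ _ (Finset.range_subset_range.mpr hk))
    · exact (gcd_dvd_right _ _).trans
        (Finset.prod_dvd_prod_of_subset _ _ _ (Finset.range_subset_range.mpr hk))
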